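/- The bound in the main theorem is sharp: let ū be the unique maximizer of M(u) = sqrt(2u)·e^{-2u}·Σ_{k=0}^∞ (u^k/k!)^2, and for each integer a ≥ 1 let S^{2a} = U_a + V_a where U_a ~ Binomial(a, ū/a) and V_a ~ Binomial(a, 1 - ū/a) are independent. Then sqrt(2a·(ū/a)·(1 - ū/a)) · P(S^{2a} = a) = sqrt(2ū(1 - ū/a)) · Σ_{k=0}^a C(a,k)^2 (ū/a)^{2k} (1 - ū/a)^{2(a-k)}, and this quantity converges to M(ū) = sup_{u≥0} M(u) as a → ∞. -/

import Mathlib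

open MeasureTheory ProbabilityTheory
open scoped ENNReal
open Filter Real

/-- `M(u) = √(2u) e^{-2u} Σ_k (u^k/k!)²`. -/
noncomputable def Mfun (u : ℝ) : ℝ :=
  Real.sqrt (2 * u) * Real.exp (-2 * u) * ∑' k : ℕ, (u ^ k / (Nat.factorial k : ℝ)) ^ 2

lemma part1 (ub : ℝ) (hub0 : 0 ≤ ub) (a : ℕ) (ha : 1 ≤ a)
    (Ω : Type) (mΩ : MeasurableSpace Ω) (μ : Measure Ω)
    (hμ : IsProbabilityMeasure μ) (U V : Ω → ℕ) (hUV : IndepFun U V μ)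
    (hU : ∀ k : ℕ, μ {ω | U ω = k} =
        ENNReal.ofReal ((a.choose k : ℝ) * (ub / a) ^ k * (1 - ub / a) ^ (a - k)))
    (hV : ∀ k : ℕ, μ {ω | V ω = k} =
        ENNReal.ofReal ((a.choose k : ℝ) * (1 - ub / a) ^ k * (ub / a) ^ (a - k))) :
    Real.sqrt (2 * a * (ub / a) * (1 - ub / a)) * (μ {ω | U ω + V ω = a}).toReal
      = Real.sqrt (2 * ub * (1 - ub / a)) *
          ∑ k ∈ Finset.range (a + 1),
            (a.choose k : ℝ) ^ 2 * (ub / a) ^ (2 * k) * (1 - ub / a) ^ (2 * (a - k)) := by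
  have haR : (0:ℝ) < a := by exact_mod_cast Nat.lt_of_lt_of_le Nat.zero_lt_one ha
  set p : ℝ := ub / a with hp
  set q : ℝ := 1 - p with hq
  have hp0 : 0 ≤ p := div_nonneg hub0 haR.le
  have hmeas : ∀ s : Set ℕ, MeasurableSet s := fun s => trivial
  have hUk : ∀ k, μ (U ⁻¹' {k}) = ENNReal.ofReal ((a.choose k : ℝ) * p ^ k * q ^ (a - k)) :=
    fun k => hU k
  have hVk : ∀ k, μ (V ⁻¹' {k}) = ENNReal.ofReal ((a.choose k : ℝ) * q ^ k * p ^ (a - k)) :=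
    fun k => hV k
  by_cases hq0 : 0 ≤ q
  swap
  · -- contradictory hypotheses : p > 1
    exfalso
    push_neg at hq0
    have hp1 : 1 < p := by simpa [hq] using hq0
    have h1 : μ (U ⁻¹' {a}) ≤ 1 := prob_le_one
    rw [hUk a] at h1
    have : p ^ a ≤ 1 := by
      have := ENNReal.ofReal_le_one.mp (by simpa [Nat.sub_self] using h1)
      simpa using this
    exact absurd this (not_le.mpr (one_lt_pow₀ hp1 (by omega)))
  -- main case
  set P : ℕ → ℝ := fun k => (a.choose k : ℝ) * p ^ k * q ^ (a - k) with hP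
  set Q : ℕ → ℝ := fun k => (a.choose k : ℝ) * q ^ k * p ^ (a - k) with hQ
  have hP0 : ∀ k, 0 ≤ P k := fun k =>
    mul_nonneg (mul_nonneg (Nat.cast_nonneg _) (pow_nonneg hp0 _)) (pow_nonneg hq0 _)
  have hQ0 : ∀ k, 0 ≤ Q k := fun k =>
    mul_nonneg (mul_nonneg (Nat.cast_nonneg _) (pow_nonneg hq0 _)) (pow_nonneg hp0 _)
  have hPzero : ∀ k ∉ Finset.range (a+1), ENNReal.ofReal (P k) = 0 := by
    intro k hk
    simp only [Finset.mem_range, not_lt] at hk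
    simp [hP, Nat.choose_eq_zero_of_lt (by omega : a < k)]
  have hQzero : ∀ k ∉ Finset.range (a+1), ENNReal.ofReal (Q k) = 0 := by
    intro k hk
    simp only [Finset.mem_range, not_lt] at hk
    simp [hQ, Nat.choose_eq_zero_of_lt (by omega : a < k)]
  have hsumPreal : ∑ k ∈ Finset.range (a+1), P k = 1 := by
    have := add_pow p q a
    simp only [hq] at this ⊢
    rw [hP]
    calc ∑ k ∈ Finset.range (a+1), (a.choose k : ℝ) * p ^ k * (1-p) ^ (a - k)
        = ∑ k ∈ Finset.range (a+1), p ^ k * (1-p) ^ (a - k) * (a.choose k : ℝ) := by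
          apply Finset.sum_congr rfl; intros; ring
      _ = (p + (1-p)) ^ a := (add_pow p (1-p) a).symm
      _ = 1 := by norm_num
  have hsumQreal : ∑ k ∈ Finset.range (a+1), Q k = 1 := by
    rw [hQ]
    calc ∑ k ∈ Finset.range (a+1), (a.choose k : ℝ) * q ^ k * p ^ (a - k)
        = ∑ k ∈ Finset.range (a+1), q ^ k * p ^ (a - k) * (a.choose k : ℝ) := by
          apply Finset.sum_congr rfl; intros; ring
      _ = (q + p) ^ a := (add_pow q p a).symm
      _ = 1 := by rw [hq]; norm_num
  have hQle1 : ∀ m, Q m ≤ 1 := by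
    intro m
    by_cases hm : m ∈ Finset.range (a+1)
    · calc Q m ≤ ∑ k ∈ Finset.range (a+1), Q k :=
        Finset.single_le_sum (fun k _ => hQ0 k) hm
      _ = 1 := hsumQreal
    · have := hQzero m hm
      have : Q m ≤ 0 := by
        by_contra hc
        push_neg at hc
        exact (ENNReal.ofReal_pos.mpr hc).ne' (hQzero m hm)
      linarith
  have hsumQ : ∑' k : ℕ, ENNReal.ofReal (Q k) = 1 := by
    rw [tsum_eq_sum hQzero, ← ENNReal.ofReal_sum_of_nonneg (fun k _ => hQ0 k), hsumQreal,
      ENNReal.ofReal_one]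
  have hindep : ∀ s t : Set ℕ, μ (U ⁻¹' s ∩ V ⁻¹' t) = μ (U ⁻¹' s) * μ (V ⁻¹' t) :=
    fun s t => hUV.measure_inter_preimage_eq_mul s t (hmeas s) (hmeas t)
  -- the key value
  set S : ℝ≥0∞ := ∑ k ∈ Finset.range (a+1), ENNReal.ofReal (P k) * ENNReal.ofReal (Q (a-k))
    with hS
  -- upper bound
  have hupper : μ {ω | U ω + V ω = a} ≤ S := by
    have hsub : {ω | U ω + V ω = a} ⊆
        ⋃ k ∈ Finset.range (a+1), (U ⁻¹' {k} ∩ V ⁻¹' {a - k}) := by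
      intro ω hω
      simp only [Set.mem_setOf_eq] at hω
      refine Set.mem_biUnion (Finset.mem_range.mpr (by omega : U ω < a + 1)) ?_
      refine ⟨rfl, ?_⟩
      show ω ∈ V ⁻¹' {a - U ω}
      simp only [Set.mem_preimage, Set.mem_singleton_iff]
      omega
    refine (measure_mono hsub).trans ((measure_biUnion_finset_le _ _).trans_eq ?_)
    refine Finset.sum_congr rfl fun k _ => ?_
    rw [hindep, hUk, hVk]
  -- lower bound pieces
  have hcompl : ∀ (k m : ℕ), μ (U ⁻¹' {k} ∩ {ω | V ω ≠ m}) ≤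
      ENNReal.ofReal (P k) * (1 - ENNReal.ofReal (Q m)) := by
    intro k m
    have hsub : U ⁻¹' {k} ∩ {ω | V ω ≠ m} ⊆
        ⋃ l : ℕ, (if l = m then (∅ : Set Ω) else U ⁻¹' {k} ∩ V ⁻¹' {l}) := by
      intro ω ⟨h1, h2⟩
      refine Set.mem_iUnion.mpr ⟨V ω, ?_⟩
      rw [if_neg h2]
      exact ⟨h1, rfl⟩
    refine (measure_mono hsub).trans ((measure_iUnion_le _).trans ?_)
    have heq : ∀ l : ℕ, μ (if l = m then (∅ : Set Ω) else U ⁻¹' {k} ∩ V ⁻¹' {l})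
        = if l = m then 0 else ENNReal.ofReal (P k) * ENNReal.ofReal (Q l) := by
      intro l
      split_ifs
      · simp
      · rw [hindep, hUk, hVk]
    calc ∑' l, μ (if l = m then (∅ : Set Ω) else U ⁻¹' {k} ∩ V ⁻¹' {l})
        = ∑' l, if l = m then 0 else ENNReal.ofReal (P k) * ENNReal.ofReal (Q l) :=
          tsum_congr heq
      _ = ENNReal.ofReal (P k) * ∑' l, (if l = m then 0 else ENNReal.ofReal (Q l)) := by
          rw [← ENNReal.tsum_mul_left]
          exact tsum_congr fun l => by split_ifs <;> simp
      _ ≤ ENNReal.ofReal (P k) * (1 - ENNReal.ofReal (Q m)) := by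
          refine mul_le_mul_right ?_ _
          refine ENNReal.le_sub_of_add_le_left ENNReal.ofReal_ne_top ?_
          have h1 := hsumQ
          rw [ENNReal.tsum_eq_add_tsum_ite (f := fun l => ENNReal.ofReal (Q l)) m] at h1
          refine le_of_eq ?_
          rw [← h1]
          congr 1
          exact tsum_congr fun l => by rcases Classical.em (l = m) with h|h <;> simp [h]
  -- lower bound
  set X : ℝ≥0∞ := ∑ k ∈ Finset.range (a+1),
      ENNReal.ofReal (P k) * (1 - ENNReal.ofReal (Q (a-k))) with hX
  have hSX : S + X = 1 := by
    rw [hS, hX, ← Finset.sum_add_distrib]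
    have : ∀ k ∈ Finset.range (a+1),
        ENNReal.ofReal (P k) * ENNReal.ofReal (Q (a-k)) +
          ENNReal.ofReal (P k) * (1 - ENNReal.ofReal (Q (a-k))) = ENNReal.ofReal (P k) := by
      intro k _
      rw [← mul_add, add_tsub_cancel_of_le (ENNReal.ofReal_le_one.mpr (hQle1 (a-k))), mul_one]
    rw [Finset.sum_congr rfl this, ← ENNReal.ofReal_sum_of_nonneg (fun k _ => hP0 k),
      hsumPreal, ENNReal.ofReal_one]
  have hXle : X ≤ 1 := by rw [← hSX]; exact le_add_self
  have hne : μ {ω | U ω + V ω ≠ a} ≤ X := by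
    set B : ℕ → Set Ω := fun k =>
      if k ≤ a then U ⁻¹' {k} ∩ {ω | V ω ≠ a - k} else U ⁻¹' {k} with hB
    have hsub : {ω | U ω + V ω ≠ a} ⊆ ⋃ k, B k := by
      intro ω hω
      simp only [Set.mem_setOf_eq] at hω
      refine Set.mem_iUnion.mpr ⟨U ω, ?_⟩
      simp only [hB]
      by_cases h : U ω ≤ a
      · rw [if_pos h]
        exact ⟨rfl, fun hc => hω (by omega)⟩
      · rw [if_neg h]
        rfl
    set g : ℕ → ℝ≥0∞ := fun k =>
      if k ≤ a then ENNReal.ofReal (P k) * (1 - ENNReal.ofReal (Q (a-k))) else 0 with hg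
    have hBg : ∀ k, μ (B k) ≤ g k := by
      intro k
      simp only [hB, hg]
      by_cases h : k ≤ a
      · rw [if_pos h, if_pos h]
        exact hcompl k (a - k)
      · rw [if_neg h, if_neg h, hUk]
        exact le_of_eq (hPzero k (by simp only [Finset.mem_range]; omega))
    have hgsum : ∑' k, g k = X := by
      rw [hX, tsum_eq_sum (s := Finset.range (a+1))]
      · exact Finset.sum_congr rfl fun k hk => by
          simp only [hg]
          exact if_pos (by simpa [Nat.lt_succ_iff] using Finset.mem_range.mp hk)
      · intro k hk
        simp only [hg]
        exact if_neg (by simpa [Nat.lt_succ_iff] using hk)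
    calc μ {ω | U ω + V ω ≠ a} ≤ μ (⋃ k, B k) := measure_mono hsub
      _ ≤ ∑' k, μ (B k) := measure_iUnion_le _
      _ ≤ ∑' k, g k := ENNReal.tsum_le_tsum hBg
      _ = X := hgsum
  have hlower : S ≤ μ {ω | U ω + V ω = a} := by
    have h1 : (1:ℝ≥0∞) ≤ μ {ω | U ω + V ω = a} + μ {ω | U ω + V ω ≠ a} := by
      have hcover : (Set.univ : Set Ω) ⊆ {ω | U ω + V ω = a} ∪ {ω | U ω + V ω ≠ a} := by
        intro ω _
        by_cases h : U ω + V ω = a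
        · exact Or.inl h
        · exact Or.inr h
      calc (1:ℝ≥0∞) = μ Set.univ := (measure_univ).symm
        _ ≤ μ ({ω | U ω + V ω = a} ∪ {ω | U ω + V ω ≠ a}) := measure_mono hcover
        _ ≤ _ := measure_union_le _ _
    have h2 : S + X ≤ μ {ω | U ω + V ω = a} + X := by
      rw [hSX]
      exact h1.trans (add_le_add_right hne _)
    exact ENNReal.le_of_add_le_add_right (hXle.trans_lt ENNReal.one_lt_top).ne h2
  have hMeq : μ {ω | U ω + V ω = a} = S := le_antisymm hupper hlower
  rw [hMeq]
  have hStoReal : S.toReal = ∑ k ∈ Finset.range (a+1), P k * Q (a-k) := by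
    rw [hS, ENNReal.toReal_sum (fun k _ => ENNReal.mul_ne_top ENNReal.ofReal_ne_top
      ENNReal.ofReal_ne_top)]
    exact Finset.sum_congr rfl fun k _ => by
      rw [← ENNReal.ofReal_mul (hP0 k), ENNReal.toReal_ofReal (mul_nonneg (hP0 k) (hQ0 _))]
  rw [hStoReal]
  have hap : (a:ℝ) * p = ub := by
    rw [hp]
    field_simp
  have hsqrt : Real.sqrt (2 * a * p * q) = Real.sqrt (2 * ub * q) := by
    rw [← hap]; ring_nf
  rw [hsqrt]
  congr 1
  refine Finset.sum_congr rfl fun k hk => ?_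
  have hka : k ≤ a := by simpa [Nat.lt_succ_iff] using Finset.mem_range.mp hk
  rw [hP, hQ]
  simp only
  rw [Nat.choose_symm hka, Nat.sub_sub_self hka, two_mul k, two_mul (a-k), pow_add, pow_add]
  ring

lemma descFact_tendsto (k : ℕ) :
    Tendsto (fun a : ℕ => (a.descFactorial k : ℝ) / (a:ℝ) ^ k) atTop (nhds 1) := by
  induction k with
  | zero => simpa using (tendsto_const_nhds : Tendsto (fun _ : ℕ => (1:ℝ)) atTop (nhds 1))
  | succ k ih =>
    have h0 : Tendsto (fun a : ℕ => 1 - (k:ℝ)/a) atTop (nhds 1) := by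
      simpa using tendsto_const_nhds.sub (tendsto_const_div_atTop_nhds_zero_nat (k:ℝ))
    have h := h0.mul ih
    rw [one_mul] at h
    refine h.congr' ?_
    filter_upwards [Filter.eventually_ge_atTop (k+1)] with a ha
    have haR : (0:ℝ) < a := by
      have : (1:ℕ) ≤ a := by omega
      exact_mod_cast Nat.lt_of_lt_of_le Nat.zero_lt_one this
    have hcast : ((a - k : ℕ) : ℝ) = (a:ℝ) - k := Nat.cast_sub (by omega)
    have hane : (a:ℝ) ≠ 0 := ne_of_gt haR
    have h1 : 1 - (k:ℝ) / a = ((a:ℝ) - k) / a := by field_simp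
    rw [Nat.descFactorial_succ, Nat.cast_mul, hcast, pow_succ, h1, div_mul_div_comm]
    rw [mul_comm ((a:ℝ)) ((a:ℝ)^k)]

lemma part2 (ub : ℝ) (hub0 : 0 ≤ ub) :
    Filter.Tendsto
      (fun a : ℕ => Real.sqrt (2 * ub * (1 - ub / a)) *
        ∑ k ∈ Finset.range (a + 1),
          (a.choose k : ℝ) ^ 2 * (ub / a) ^ (2 * k) * (1 - ub / a) ^ (2 * (a - k)))
      Filter.atTop (nhds (Mfun ub)) := by
  classical
  set A : ℕ → ℕ → ℝ := fun a k =>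
    if k ≤ a then (a.choose k : ℝ) ^ 2 * (ub / a) ^ (2 * k) * (1 - ub / a) ^ (2 * (a - k))
    else 0 with hA
  have hsum_eq : ∀ a : ℕ,
      ∑ k ∈ Finset.range (a + 1),
        (a.choose k : ℝ) ^ 2 * (ub / a) ^ (2 * k) * (1 - ub / a) ^ (2 * (a - k))
      = ∑' k : ℕ, A a k := by
    intro a
    rw [tsum_eq_sum (s := Finset.range (a+1))]
    · exact Finset.sum_congr rfl fun k hk => by
        simp only [hA]
        rw [if_pos (by simpa [Nat.lt_succ_iff] using Finset.mem_range.mp hk)]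
    · intro k hk
      simp only [hA]
      exact if_neg (by simpa [Nat.lt_succ_iff] using hk)
  -- bound
  set bound : ℕ → ℝ := fun k => (ub ^ k / (Nat.factorial k : ℝ)) ^ 2 with hb
  have hbound_sum : Summable bound := by
    refine Summable.of_nonneg_of_le (fun k => sq_nonneg _) (fun k => ?_)
      (Real.summable_pow_div_factorial (ub^2))
    have h1 : (1:ℝ) ≤ (Nat.factorial k : ℝ) := by exact_mod_cast Nat.one_le_iff_ne_zero.mpr (Nat.factorial_ne_zero k)
    have : bound k = (ub^2)^k / ((Nat.factorial k : ℝ))^2 := by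
      rw [hb]
      simp only
      rw [div_pow, ← pow_mul, ← pow_mul, mul_comm]
    rw [this]
    apply div_le_div_of_nonneg_left (by positivity) (by positivity)
    nlinarith
  -- the key quantity rewriting, for a large
  have hchoose : ∀ (k a : ℕ), 1 ≤ a →
      (a.choose k : ℝ) * (ub / a) ^ k
        = (ub ^ k / (Nat.factorial k : ℝ)) * ((a.descFactorial k : ℝ) / (a:ℝ) ^ k) := by
    intro k a ha
    have haR : (0:ℝ) < a := by exact_mod_cast Nat.lt_of_lt_of_le Nat.zero_lt_one ha
    have hd : (a.descFactorial k : ℝ) = (Nat.factorial k : ℝ) * (a.choose k : ℝ) := by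
      exact_mod_cast congrArg Nat.cast (Nat.descFactorial_eq_factorial_mul_choose a k)
    rw [hd, div_pow]
    have hk : (0:ℝ) < (Nat.factorial k : ℝ) := by exact_mod_cast Nat.factorial_pos k
    field_simp
  have hdescle : ∀ (k a : ℕ), (a.descFactorial k : ℝ) ≤ (a:ℝ)^k := by
    intro k a
    exact_mod_cast Nat.descFactorial_le_pow a k
  -- pointwise convergence
  have hpt : ∀ k : ℕ, Tendsto (fun a : ℕ => A a k) atTop
      (nhds ((ub ^ k / (Nat.factorial k : ℝ)) ^ 2 * Real.exp (-2 * ub))) := by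
    intro k
    have hq : Tendsto (fun a : ℕ => 1 - ub / a) atTop (nhds 1) := by
      simpa using tendsto_const_nhds.sub (tendsto_const_div_atTop_nhds_zero_nat ub)
    have hqa : Tendsto (fun a : ℕ => (1 - ub / a) ^ a) atTop (nhds (Real.exp (-ub))) := by
      have := Real.tendsto_one_add_div_pow_exp (-ub)
      refine this.congr fun a => by rw [sub_eq_add_neg, neg_div]
    have hqk : Tendsto (fun a : ℕ => (1 - ub / a) ^ k) atTop (nhds 1) := by
      simpa using hq.pow k
    have hinner : Tendsto
        (fun a : ℕ => (ub ^ k / (Nat.factorial k : ℝ)) * ((a.descFactorial k : ℝ) / (a:ℝ) ^ k)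
          * ((1 - ub / a) ^ a / (1 - ub / a) ^ k))
        atTop (nhds ((ub ^ k / (Nat.factorial k : ℝ)) * 1 * (Real.exp (-ub) / 1))) :=
      ((tendsto_const_nhds.mul (descFact_tendsto k)).mul (hqa.div hqk one_ne_zero))
    have hsq := hinner.pow 2
    have hval : ((ub ^ k / (Nat.factorial k : ℝ)) * 1 * (Real.exp (-ub) / 1)) ^ 2
        = (ub ^ k / (Nat.factorial k : ℝ)) ^ 2 * Real.exp (-2 * ub) := by
      rw [div_one, mul_one, mul_pow, sq (Real.exp (-ub)), ← Real.exp_add]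
      ring_nf
    rw [hval] at hsq
    refine hsq.congr' ?_
    filter_upwards [Filter.eventually_ge_atTop (max k (Nat.floor ub + 1))] with a ha
    have hak : k ≤ a := le_trans (le_max_left _ _) ha
    have haub : ub < a := by
      have h1 : Nat.floor ub + 1 ≤ a := le_trans (le_max_right _ _) ha
      calc ub < (Nat.floor ub + 1 : ℕ) := by
            push_cast
            exact Nat.lt_floor_add_one ub
        _ ≤ a := by exact_mod_cast h1
    have haR : (0:ℝ) < a := lt_of_le_of_lt hub0 haub
    have hq0 : (0:ℝ) < 1 - ub / a := by
      rw [sub_pos]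
      exact (div_lt_one haR).mpr haub
    have ha1 : 1 ≤ a := by
      have := Nat.floor ub + 1
      omega
    simp only [hA]
    rw [if_pos hak]
    have e1 : (ub ^ k / (Nat.factorial k:ℝ)) * ((a.descFactorial k:ℝ)/(a:ℝ)^k)
        = (a.choose k : ℝ) * (ub/a)^k := (hchoose k a ha1).symm
    have e2 : (1 - ub/a)^a / (1 - ub/a)^k = (1 - ub/a)^(a - k) := by
      rw [pow_sub₀ _ (ne_of_gt hq0) hak, div_eq_mul_inv]
    rw [e1, e2]
    ring
  -- domination
  have hbound_ev : ∀ᶠ a : ℕ in atTop, ∀ k, ‖A a k‖ ≤ bound k := by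
    filter_upwards [Filter.eventually_ge_atTop (Nat.floor ub + 1)] with a ha
    have haub : ub < a := by
      calc ub < (Nat.floor ub + 1 : ℕ) := by
            push_cast
            exact Nat.lt_floor_add_one ub
        _ ≤ a := by exact_mod_cast ha
    have haR : (0:ℝ) < a := lt_of_le_of_lt hub0 haub
    have ha1 : 1 ≤ a := by omega
    have hp0 : 0 ≤ ub / a := div_nonneg hub0 haR.le
    have hq0 : (0:ℝ) ≤ 1 - ub / a := by
      rw [sub_nonneg]
      exact ((div_le_one haR).mpr haub.le)
    have hq1 : 1 - ub / a ≤ 1 := by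
      have : 0 ≤ ub / a := hp0
      linarith
    intro k
    by_cases hak : k ≤ a
    · have key : A a k = ((a.choose k:ℝ) * (ub/a)^k)^2 * ((1 - ub/a)^(a-k))^2 := by
        simp only [hA]
        rw [if_pos hak]
        ring
      have hX0 : 0 ≤ (a.choose k:ℝ) * (ub/a)^k :=
        mul_nonneg (Nat.cast_nonneg _) (pow_nonneg hp0 _)
      have hY0 : 0 ≤ (1 - ub/a)^(a-k) := pow_nonneg hq0 _
      have hY1 : (1 - ub/a)^(a-k) ≤ 1 := pow_le_one₀ hq0 hq1
      have hX : (a.choose k:ℝ) * (ub/a)^k ≤ ub^k / (Nat.factorial k:ℝ) := by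
        rw [hchoose k a ha1]
        have hd : (a.descFactorial k : ℝ) / (a:ℝ)^k ≤ 1 :=
          div_le_one_of_le₀ (hdescle k a) (by positivity)
        calc (ub ^ k / (Nat.factorial k:ℝ)) * ((a.descFactorial k:ℝ)/(a:ℝ)^k)
            ≤ (ub ^ k / (Nat.factorial k:ℝ)) * 1 :=
              mul_le_mul_of_nonneg_left hd (by positivity)
          _ = ub ^ k / (Nat.factorial k:ℝ) := mul_one _
      have hA0 : 0 ≤ A a k := by
        rw [key]
        positivity
      rw [Real.norm_eq_abs, abs_of_nonneg hA0, key, hb]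
      calc ((a.choose k:ℝ) * (ub/a)^k)^2 * ((1 - ub/a)^(a-k))^2
          ≤ ((a.choose k:ℝ) * (ub/a)^k)^2 * 1 := by
            apply mul_le_mul_of_nonneg_left _ (sq_nonneg _)
            calc ((1 - ub/a)^(a-k))^2 ≤ 1^2 := by
                  apply pow_le_pow_left₀ hY0 hY1
              _ = 1 := one_pow 2
        _ = ((a.choose k:ℝ) * (ub/a)^k)^2 := mul_one _
        _ ≤ (ub ^ k / (Nat.factorial k:ℝ))^2 := pow_le_pow_left₀ hX0 hX 2
    · have : A a k = 0 := by
        simp only [hA]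
        exact if_neg hak
      rw [this]
      simp only [norm_zero, hb]
      positivity
  have htsum := tendsto_tsum_of_dominated_convergence hbound_sum hpt hbound_ev
  have hsqrt : Tendsto (fun a : ℕ => Real.sqrt (2 * ub * (1 - ub / a))) atTop
      (nhds (Real.sqrt (2 * ub))) := by
    have h1 : Tendsto (fun a : ℕ => 2 * ub * (1 - ub / a)) atTop (nhds (2 * ub)) := by
      have hq : Tendsto (fun a : ℕ => 1 - ub / a) atTop (nhds 1) := by
        simpa using tendsto_const_nhds.sub (tendsto_const_div_atTop_nhds_zero_nat ub)
      simpa using (tendsto_const_nhds (x := 2 * ub)).mul hq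
    exact (Real.continuous_sqrt.tendsto _).comp h1
  have hmul := hsqrt.mul htsum
  have hval : Real.sqrt (2*ub) *
      (∑' k : ℕ, (ub ^ k / (Nat.factorial k : ℝ)) ^ 2 * Real.exp (-2 * ub)) = Mfun ub := by
    rw [tsum_mul_right]
    unfold Mfun
    ring
  rw [hval] at hmul
  exact hmul.congr fun a => by rw [hsum_eq a]

theorem bound_is_sharp (ub : ℝ) (hub0 : 0 ≤ ub)
    (hubmax : ∀ u : ℝ, 0 ≤ u → Mfun u ≤ Mfun ub)
    (hubuniq : ∀ v : ℝ, 0 ≤ v → (∀ u : ℝ, 0 ≤ u → Mfun u ≤ Mfun v) → v = ub) :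
    (∀ a : ℕ, 1 ≤ a → ∀ (Ω : Type) (_ : MeasurableSpace Ω) (μ : Measure Ω),
      IsProbabilityMeasure μ → ∀ U V : Ω → ℕ, IndepFun U V μ →
      (∀ k : ℕ, μ {ω | U ω = k} =
        ENNReal.ofReal ((a.choose k : ℝ) * (ub / a) ^ k * (1 - ub / a) ^ (a - k))) →
      (∀ k : ℕ, μ {ω | V ω = k} =
        ENNReal.ofReal ((a.choose k : ℝ) * (1 - ub / a) ^ k * (ub / a) ^ (a - k))) →
      Real.sqrt (2 * a * (ub / a) * (1 - ub / a)) * (μ {ω | U ω + V ω = a}).toReal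
        = Real.sqrt (2 * ub * (1 - ub / a)) *
            ∑ k ∈ Finset.range (a + 1),
              (a.choose k : ℝ) ^ 2 * (ub / a) ^ (2 * k) * (1 - ub / a) ^ (2 * (a - k))) ∧
    Filter.Tendsto
      (fun a : ℕ => Real.sqrt (2 * ub * (1 - ub / a)) *
        ∑ k ∈ Finset.range (a + 1),
          (a.choose k : ℝ) ^ 2 * (ub / a) ^ (2 * k) * (1 - ub / a) ^ (2 * (a - k)))
      Filter.atTop (nhds (Mfun ub)) ∧
    Mfun ub = sSup {r : ℝ | ∃ u : ℝ, 0 ≤ u ∧ r = Mfun u} := by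
  refine ⟨fun a ha Ω mΩ μ hμ U V hUV hU hV =>
      part1 ub hub0 a ha Ω mΩ μ hμ U V hUV hU hV, part2 ub hub0, ?_⟩
  apply le_antisymm
  · exact le_csSup ⟨Mfun ub, fun r ⟨u, hu, hr⟩ => hr ▸ hubmax u hu⟩ ⟨ub, hub0, rfl⟩
  · exact csSup_le ⟨Mfun ub, ub, hub0, rfl⟩ (fun r ⟨u, hu, hr⟩ => hr ▸ hubmax u hu)
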